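/- Suppose F : X → ℝ is measurable with lim_{n→±∞} (1/n) F(fⁿ x) = 0 for μ-a.e. x, where f is an invertible μ-preserving map. Then for every ε > 0 there exists a measurable function C : X → (0,∞), finite μ-a.e., such that e^{F(x)} ≤ C(x) and C(fⁿ x) ≤ C(x) e^{ε|n|} for all n ∈ ℤ and μ-a.e. x. -/

import Mathlib

open Filter MeasureTheory

open scoped ENNReal

/-- One-step tempering estimate for the orbit supremum. -/
private lemma temper_aux {X : Type*} (f g : X → X) (hgf : Function.LeftInverse g f)
    (F : X → ℝ) (ε : ℝ) (hε : 0 ≤ ε) (x : X) :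
    ((⨆ n : ℕ, ENNReal.ofReal (Real.exp (F (f^[n] (f x)) - ε * n))) ⊔
      ⨆ n : ℕ, ENNReal.ofReal (Real.exp (F (g^[n] (f x)) - ε * n))) ≤
    ENNReal.ofReal (Real.exp ε) *
      ((⨆ n : ℕ, ENNReal.ofReal (Real.exp (F (f^[n] x) - ε * n))) ⊔
        ⨆ n : ℕ, ENNReal.ofReal (Real.exp (F (g^[n] x) - ε * n))) := by
  have hE1 : (1 : ℝ≥0∞) ≤ ENNReal.ofReal (Real.exp ε) := by
    rw [ENNReal.one_le_ofReal]; exact Real.one_le_exp hε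
  set E := ENNReal.ofReal (Real.exp ε) with hE
  set A := ((⨆ n : ℕ, ENNReal.ofReal (Real.exp (F (f^[n] x) - ε * n))) ⊔
      ⨆ n : ℕ, ENNReal.ofReal (Real.exp (F (g^[n] x) - ε * n))) with hA
  have hfA : ∀ n : ℕ, ENNReal.ofReal (Real.exp (F (f^[n] x) - ε * n)) ≤ A := fun n =>
    le_sup_of_le_left (le_iSup (fun n : ℕ => ENNReal.ofReal (Real.exp (F (f^[n] x) - ε * n))) n)
  have hgA : ∀ n : ℕ, ENNReal.ofReal (Real.exp (F (g^[n] x) - ε * n)) ≤ A := fun n =>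
    le_sup_of_le_right (le_iSup (fun n : ℕ => ENNReal.ofReal (Real.exp (F (g^[n] x) - ε * n))) n)
  apply sup_le
  · apply iSup_le; intro n
    have h1 : f^[n] (f x) = f^[n + 1] x := (Function.iterate_succ_apply f n x).symm
    have h2 : F (f^[n + 1] x) - ε * n = ε + (F (f^[n + 1] x) - ε * (n + 1 : ℕ)) := by
      push_cast; ring
    rw [h1, h2, Real.exp_add, ENNReal.ofReal_mul (Real.exp_nonneg ε)]
    exact mul_le_mul_right (hfA (n + 1)) E
  · apply iSup_le; intro n
    cases n with
    | zero =>
      have h0 : g^[0] (f x) = f^[1] x := by simp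
      have h2 : F (f^[1] x) - ε * (0 : ℕ) = ε + (F (f^[1] x) - ε * (1 : ℕ)) := by
        push_cast; ring
      rw [h0, h2, Real.exp_add, ENNReal.ofReal_mul (Real.exp_nonneg ε)]
      exact mul_le_mul_right (hfA 1) E
    | succ m =>
      have h1 : g^[m + 1] (f x) = g^[m] x := by
        rw [Function.iterate_succ_apply, hgf x]
      have h2 : Real.exp (F (g^[m] x) - ε * (m + 1 : ℕ)) ≤
          Real.exp (F (g^[m] x) - ε * m) := by
        apply Real.exp_le_exp.mpr; push_cast; nlinarith
      calc ENNReal.ofReal (Real.exp (F (g^[m + 1] (f x)) - ε * (m + 1 : ℕ)))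
          ≤ ENNReal.ofReal (Real.exp (F (g^[m] x) - ε * m)) := by
            rw [h1]; exact ENNReal.ofReal_le_ofReal h2
        _ ≤ A := hgA m
        _ = 1 * A := (one_mul A).symm
        _ ≤ E * A := mul_le_mul_left hE1 A

set_option maxHeartbeats 1000000 in
/-- tempering kernel: if `F(fⁿ x)/n → 0` as `n → ±∞` a.e. for an invertible
bi-measurable measure-preserving `f`, then for every `ε > 0` there is a measurable
`C : X → (0,∞)`, finite a.e., with `e^{F(x)} ≤ C(x)` and `C(fⁿ x) ≤ C(x) e^{ε|n|}`
for all `n ∈ ℤ` and a.e. `x`. -/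
theorem tempering_kernel {X : Type*} [MeasurableSpace X] (μ : Measure X)
    [IsProbabilityMeasure μ] (f g : X → X) (hfm : Measurable f) (hgm : Measurable g)
    (hgf : Function.LeftInverse g f) (hfg : Function.RightInverse g f)
    (hf : MeasurePreserving f μ μ)
    (F : X → ℝ) (hF : Measurable F)
    (htemp : ∀ᵐ x ∂μ,
      Tendsto (fun n : ℕ => (n : ℝ)⁻¹ * F (f^[n] x)) atTop (nhds 0) ∧
      Tendsto (fun n : ℕ => (n : ℝ)⁻¹ * F (g^[n] x)) atTop (nhds 0))
    (ε : ℝ) (hε : 0 < ε) :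
    ∃ C : X → ℝ, Measurable C ∧ ∀ᵐ x ∂μ,
      0 < C x ∧ Real.exp (F x) ≤ C x ∧
      ∀ n : ℕ, C (f^[n] x) ≤ C x * Real.exp (ε * n) ∧
        C (g^[n] x) ≤ C x * Real.exp (ε * n) := by
  classical
  set D : X → ℝ≥0∞ := fun x =>
    ((⨆ n : ℕ, ENNReal.ofReal (Real.exp (F (f^[n] x) - ε * n))) ⊔
      ⨆ n : ℕ, ENNReal.ofReal (Real.exp (F (g^[n] x) - ε * n))) with hD
  -- one-step estimates
  have hstep_f : ∀ y, D (f y) ≤ ENNReal.ofReal (Real.exp ε) * D y := fun y =>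
    temper_aux f g hgf F ε hε.le y
  have hstep_g : ∀ y, D (g y) ≤ ENNReal.ofReal (Real.exp ε) * D y := by
    intro y
    have h := temper_aux g f hfg F ε hε.le y
    calc D (g y) = (⨆ n : ℕ, ENNReal.ofReal (Real.exp (F (g^[n] (g y)) - ε * n))) ⊔
          (⨆ n : ℕ, ENNReal.ofReal (Real.exp (F (f^[n] (g y)) - ε * n))) := sup_comm _ _
      _ ≤ ENNReal.ofReal (Real.exp ε) *
          ((⨆ n : ℕ, ENNReal.ofReal (Real.exp (F (g^[n] y) - ε * n))) ⊔
            (⨆ n : ℕ, ENNReal.ofReal (Real.exp (F (f^[n] y) - ε * n)))) := h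
      _ = ENNReal.ofReal (Real.exp ε) * D y := by rw [hD]; rw [sup_comm]
  -- iterated estimates
  have hiter : ∀ (T : X → X), (∀ y, D (T y) ≤ ENNReal.ofReal (Real.exp ε) * D y) →
      ∀ (n : ℕ) (y : X), D (T^[n] y) ≤ ENNReal.ofReal (Real.exp (ε * n)) * D y := by
    intro T hT n
    induction n with
    | zero =>
      intro y
      simp only [Function.iterate_zero_apply, Nat.cast_zero, mul_zero, Real.exp_zero,
        ENNReal.ofReal_one, one_mul]
      exact le_rfl
    | succ m ih =>
      intro y
      rw [Function.iterate_succ_apply']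
      calc D (T (T^[m] y)) ≤ ENNReal.ofReal (Real.exp ε) * D (T^[m] y) := hT _
        _ ≤ ENNReal.ofReal (Real.exp ε) * (ENNReal.ofReal (Real.exp (ε * m)) * D y) :=
            mul_le_mul_right (ih y) _
        _ = ENNReal.ofReal (Real.exp (ε * (m + 1 : ℕ))) * D y := by
            rw [← mul_assoc, ← ENNReal.ofReal_mul (Real.exp_nonneg ε), ← Real.exp_add]
            congr 2
            push_cast; ring
  -- measurability of D
  have hDmeas : Measurable D := by
    apply Measurable.sup
    · exact Measurable.iSup fun n => ENNReal.measurable_ofReal.comp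
        (Real.measurable_exp.comp ((hF.comp (hfm.iterate n)).sub measurable_const))
    · exact Measurable.iSup fun n => ENNReal.measurable_ofReal.comp
        (Real.measurable_exp.comp ((hF.comp (hgm.iterate n)).sub measurable_const))
  -- a.e. finiteness of D
  have hfin : ∀ᵐ x ∂μ, D x < ⊤ := by
    filter_upwards [htemp] with x hx
    have bound : ∀ (T : X → X), Tendsto (fun n : ℕ => (n : ℝ)⁻¹ * F (T^[n] x)) atTop (nhds 0) →
        (⨆ n : ℕ, ENNReal.ofReal (Real.exp (F (T^[n] x) - ε * n))) < ⊤ := by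
      intro T hT
      have hev : ∀ᶠ n : ℕ in atTop, (n : ℝ)⁻¹ * F (T^[n] x) < ε :=
        hT.eventually_lt_const hε
      obtain ⟨N, hN⟩ := eventually_atTop.mp hev
      set B : ℝ := 1 + ∑ k ∈ Finset.range (N + 1), Real.exp (F (T^[k] x) - ε * k) with hB
      have hsum_nonneg : (0:ℝ) ≤ ∑ k ∈ Finset.range (N + 1), Real.exp (F (T^[k] x) - ε * k) :=
        Finset.sum_nonneg fun i _ => (Real.exp_nonneg _)
      have hub : ∀ n : ℕ, Real.exp (F (T^[n] x) - ε * n) ≤ B := by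
        intro n
        by_cases hn : n ≤ N
        · have h1 : Real.exp (F (T^[n] x) - ε * n) ≤
              ∑ k ∈ Finset.range (N + 1), Real.exp (F (T^[k] x) - ε * k) :=
            Finset.single_le_sum (f := fun k : ℕ => Real.exp (F (T^[k] x) - ε * k))
              (fun i _ => Real.exp_nonneg _)
              (Finset.mem_range.mpr (Nat.lt_succ_of_le hn))
          linarith
        · push_neg at hn
          have hn1 : (1:ℝ) ≤ (n : ℝ) := by exact_mod_cast Nat.one_le_iff_ne_zero.mpr (by omega)
          have h2 := hN n hn.le
          have hnpos : (0:ℝ) < (n:ℝ) := by linarith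
          have h3 : F (T^[n] x) < ε * n := by
            have := mul_lt_mul_of_pos_left h2 hnpos
            rw [← mul_assoc, mul_inv_cancel₀ (ne_of_gt hnpos), one_mul] at this
            linarith
          have h4 : Real.exp (F (T^[n] x) - ε * n) ≤ 1 := by
            rw [← Real.exp_zero]
            exact Real.exp_le_exp.mpr (by linarith)
          linarith
      have : (⨆ n : ℕ, ENNReal.ofReal (Real.exp (F (T^[n] x) - ε * n))) ≤
          ENNReal.ofReal B :=
        iSup_le fun n => ENNReal.ofReal_le_ofReal (hub n)
      exact lt_of_le_of_lt this ENNReal.ofReal_lt_top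
    rw [hD]
    exact sup_lt_iff.mpr ⟨bound f hx.1, bound g hx.2⟩
  -- the function C
  refine ⟨fun x => max 1 (D x).toReal, measurable_const.max hDmeas.ennreal_toReal, ?_⟩
  filter_upwards [hfin] with x hx
  refine ⟨lt_of_lt_of_le zero_lt_one (le_max_left _ _), ?_, ?_⟩
  · have h0 : ENNReal.ofReal (Real.exp (F x)) ≤ D x := by
      have : ENNReal.ofReal (Real.exp (F (f^[0] x) - ε * (0:ℕ))) ≤ D x :=
        le_sup_of_le_left (le_iSup (fun n : ℕ =>
          ENNReal.ofReal (Real.exp (F (f^[n] x) - ε * n))) 0)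
      simpa using this
    have := ENNReal.toReal_mono hx.ne h0
    rw [ENNReal.toReal_ofReal (Real.exp_nonneg _)] at this
    exact le_trans this (le_max_right _ _)
  · intro n
    have key : ∀ y : X, D y ≤ ENNReal.ofReal (Real.exp (ε * n)) * D x →
        max 1 (D y).toReal ≤ max 1 (D x).toReal * Real.exp (ε * n) := by
      intro y hy
      have hne : ENNReal.ofReal (Real.exp (ε * n)) * D x ≠ ⊤ :=
        ENNReal.mul_ne_top ENNReal.ofReal_ne_top hx.ne
      have h1 := ENNReal.toReal_mono hne hy
      rw [ENNReal.toReal_mul, ENNReal.toReal_ofReal (Real.exp_nonneg _)] at h1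
      have he1 : (1:ℝ) ≤ Real.exp (ε * n) :=
        Real.one_le_exp (by positivity)
      have hm1 : (1:ℝ) ≤ max 1 (D x).toReal := le_max_left _ _
      apply max_le
      · nlinarith
      · calc (D y).toReal ≤ Real.exp (ε * n) * (D x).toReal := h1
          _ ≤ Real.exp (ε * n) * max 1 (D x).toReal := by
              have := le_max_right (1:ℝ) (D x).toReal
              nlinarith
          _ = max 1 (D x).toReal * Real.exp (ε * n) := mul_comm _ _
    exact ⟨key _ (hiter f hstep_f n x), key _ (hiter g hstep_g n x)⟩
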